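/- Let β = (1, β₂) ∈ ℝ² with β₂ ∈ [−ε, ε], let x = (x₁, x₂) ∈ [−1,1]² with x₂ > 0, and let y = ⟨β, x⟩ + η where η is uniformly distributed on [−1, 1]. Then the probability that (y + 1 − x₁)/x₂ < ε is at most ε, and the probability that (y − 1 − x₁)/x₂ > −ε is at most ε. Consequently, the probability that the interval [(y−1−x₁)/x₂, (y+1−x₁)/x₂] fails to contain [−ε, ε] is at most 2ε. -/

import Mathlib

open MeasureTheory Set
open scoped ENNReal

lemma unif_lt {Ω : Type*} [MeasurableSpace Ω] (μ : Measure Ω)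
    (η : Ω → ℝ) (hη : Measurable η)
    (hunif : Measure.map η μ = (2 : ℝ≥0∞)⁻¹ • volume.restrict (Icc (-1 : ℝ) 1))
    (c : ℝ) : μ {ω | η ω < c} ≤ ENNReal.ofReal ((c + 1) / 2) := by
  have h1 : μ {ω | η ω < c} = Measure.map η μ (Iio c) := by
    rw [Measure.map_apply hη measurableSet_Iio]; rfl
  rw [h1, hunif]
  simp only [Measure.smul_apply, smul_eq_mul, Measure.restrict_apply measurableSet_Iio]
  have hsub : Iio c ∩ Icc (-1 : ℝ) 1 ⊆ Icc (-1) c := fun x hx =>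
    ⟨hx.2.1, le_of_lt hx.1⟩
  calc (2 : ℝ≥0∞)⁻¹ * volume (Iio c ∩ Icc (-1 : ℝ) 1)
      ≤ (2 : ℝ≥0∞)⁻¹ * volume (Icc (-1 : ℝ) c) := by
        exact mul_le_mul_right (measure_mono hsub) _
    _ = (2 : ℝ≥0∞)⁻¹ * ENNReal.ofReal (c + 1) := by
        rw [Real.volume_Icc]; ring_nf
    _ = ENNReal.ofReal ((c + 1) / 2) := by
        rw [ENNReal.ofReal_div_of_pos (by norm_num), ENNReal.ofReal_ofNat]
        rw [ENNReal.div_eq_inv_mul]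

lemma unif_gt {Ω : Type*} [MeasurableSpace Ω] (μ : Measure Ω)
    (η : Ω → ℝ) (hη : Measurable η)
    (hunif : Measure.map η μ = (2 : ℝ≥0∞)⁻¹ • volume.restrict (Icc (-1 : ℝ) 1))
    (c : ℝ) : μ {ω | c < η ω} ≤ ENNReal.ofReal ((1 - c) / 2) := by
  have h1 : μ {ω | c < η ω} = Measure.map η μ (Ioi c) := by
    rw [Measure.map_apply hη measurableSet_Ioi]; rfl
  rw [h1, hunif]
  simp only [Measure.smul_apply, smul_eq_mul, Measure.restrict_apply measurableSet_Ioi]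
  have hsub : Ioi c ∩ Icc (-1 : ℝ) 1 ⊆ Icc c 1 := fun x hx =>
    ⟨le_of_lt hx.1, hx.2.2⟩
  calc (2 : ℝ≥0∞)⁻¹ * volume (Ioi c ∩ Icc (-1 : ℝ) 1)
      ≤ (2 : ℝ≥0∞)⁻¹ * volume (Icc c 1) := by
        exact mul_le_mul_right (measure_mono hsub) _
    _ = (2 : ℝ≥0∞)⁻¹ * ENNReal.ofReal (1 - c) := by
        rw [Real.volume_Icc]
    _ = ENNReal.ofReal ((1 - c) / 2) := by
        rw [ENNReal.ofReal_div_of_pos (by norm_num), ENNReal.ofReal_ofNat]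
        rw [ENNReal.div_eq_inv_mul]

/-- Let `β = (1, β₂)` with `β₂ ∈ [−ε, ε]`, let `x = (x₁, x₂) ∈ [−1,1]²` with `x₂ > 0`,
and let `y = x₁ + β₂ x₂ + η` where `η` is uniform on `[−1,1]`. Then
`P((y + 1 − x₁)/x₂ < ε) ≤ ε`, `P((y − 1 − x₁)/x₂ > −ε) ≤ ε`, and the probability that
the interval `[(y−1−x₁)/x₂, (y+1−x₁)/x₂]` fails to contain `[−ε, ε]` is at most `2ε`. -/
theorem stmt5 {Ω : Type*} [MeasurableSpace Ω] (μ : Measure Ω) [IsProbabilityMeasure μ]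
    (ε x₁ x₂ β₂ : ℝ) (hε0 : 0 < ε) (hε1 : ε ≤ 1 / 2)
    (hx₁ : x₁ ∈ Icc (-1 : ℝ) 1) (hx₂0 : 0 < x₂) (hx₂1 : x₂ ≤ 1)
    (hβ₂ : β₂ ∈ Icc (-ε) ε)
    (η : Ω → ℝ) (hη : Measurable η)
    (hunif : Measure.map η μ = (2 : ℝ≥0∞)⁻¹ • volume.restrict (Icc (-1 : ℝ) 1))
    (y : Ω → ℝ) (hy : ∀ ω, y ω = x₁ + β₂ * x₂ + η ω) :
    μ {ω | (y ω + 1 - x₁) / x₂ < ε} ≤ ENNReal.ofReal ε ∧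
      μ {ω | (y ω - 1 - x₁) / x₂ > -ε} ≤ ENNReal.ofReal ε ∧
      μ {ω | ¬ Icc (-ε) ε ⊆ Icc ((y ω - 1 - x₁) / x₂) ((y ω + 1 - x₁) / x₂)}
        ≤ ENNReal.ofReal (2 * ε) := by
  have hset1 : {ω | (y ω + 1 - x₁) / x₂ < ε} = {ω | η ω < (ε - β₂) * x₂ - 1} := by
    ext ω
    simp only [mem_setOf_eq, hy, div_lt_iff₀ hx₂0]
    constructor <;> intro h <;> nlinarith
  have hset2 : {ω | (y ω - 1 - x₁) / x₂ > -ε} = {ω | 1 - (ε + β₂) * x₂ < η ω} := by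
    ext ω
    simp only [mem_setOf_eq, hy, gt_iff_lt, lt_div_iff₀ hx₂0]
    constructor <;> intro h <;> nlinarith
  have h1 : μ {ω | (y ω + 1 - x₁) / x₂ < ε} ≤ ENNReal.ofReal ε := by
    rw [hset1]
    refine le_trans (unif_lt μ η hη hunif _) (ENNReal.ofReal_le_ofReal ?_)
    have hb : ε - β₂ ≤ 2 * ε := by linarith [hβ₂.1]
    nlinarith
  have h2 : μ {ω | (y ω - 1 - x₁) / x₂ > -ε} ≤ ENNReal.ofReal ε := by
    rw [hset2]
    refine le_trans (unif_gt μ η hη hunif _) (ENNReal.ofReal_le_ofReal ?_)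
    have hb : ε + β₂ ≤ 2 * ε := by linarith [hβ₂.2]
    nlinarith
  refine ⟨h1, h2, ?_⟩
  have hsub : {ω | ¬ Icc (-ε) ε ⊆ Icc ((y ω - 1 - x₁) / x₂) ((y ω + 1 - x₁) / x₂)}
      ⊆ {ω | (y ω + 1 - x₁) / x₂ < ε} ∪ {ω | (y ω - 1 - x₁) / x₂ > -ε} := by
    intro ω hω
    simp only [mem_setOf_eq] at hω
    by_contra hc
    simp only [mem_union, mem_setOf_eq, not_or, not_lt, gt_iff_lt] at hc
    exact hω (Icc_subset_Icc hc.2 hc.1)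
  calc μ _ ≤ μ ({ω | (y ω + 1 - x₁) / x₂ < ε} ∪ {ω | (y ω - 1 - x₁) / x₂ > -ε}) :=
        measure_mono hsub
    _ ≤ μ {ω | (y ω + 1 - x₁) / x₂ < ε} + μ {ω | (y ω - 1 - x₁) / x₂ > -ε} :=
        measure_union_le _ _
    _ ≤ ENNReal.ofReal ε + ENNReal.ofReal ε := add_le_add h1 h2
    _ = ENNReal.ofReal (2 * ε) := by
        rw [← ENNReal.ofReal_add hε0.le hε0.le]; ring_nf
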